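/- Let u : U → ℝ be a C² solution of the minimal surface equation (1+u_y²)u_xx − 2 u_x u_y u_xy + (1+u_x²)u_yy = 0, and W = sqrt(1+u_x²+u_y²). Then the 1-form ω₁ = (u_x u_y dx + (1+u_y²) dy)/W is closed: ∂/∂y(u_x u_y / W) = ∂/∂x((1+u_y²)/W). -/

import Mathlib

/-- `∂u/∂x` on `ℝ²`. -/
noncomputable def ux (u : ℝ × ℝ → ℝ) (z : ℝ × ℝ) : ℝ := fderiv ℝ u z (1, 0)

/-- `∂u/∂y` on `ℝ²`. -/
noncomputable def uy (u : ℝ × ℝ → ℝ) (z : ℝ × ℝ) : ℝ := fderiv ℝ u z (0, 1)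

/-- `W = √(1 + u_x² + u_y²)`. -/
noncomputable def Wfun (u : ℝ × ℝ → ℝ) (z : ℝ × ℝ) : ℝ :=
  Real.sqrt (1 + ux u z ^ 2 + uy u z ^ 2)

/-- Quotient rule for `HasFDerivAt`, target `ℝ`. -/
theorem myHasFDerivAt_div {E : Type*} [NormedAddCommGroup E] [NormedSpace ℝ E]
    {c d : E → ℝ} {c' d' : E →L[ℝ] ℝ} {x : E}
    (hc : HasFDerivAt c c' x) (hd : HasFDerivAt d d' x) (hx : d x ≠ 0) :
    HasFDerivAt (fun y => c y / d y)
      ((d x)⁻¹ • c' - (c x / d x ^ 2) • d') x := by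
  have hinv : HasFDerivAt (fun y => (d y)⁻¹) ((-(d x ^ 2)⁻¹) • d') x :=
    (hasDerivAt_inv hx).comp_hasFDerivAt x hd
  have := hc.mul hinv
  simp only [div_eq_mul_inv]
  refine (show HasFDerivAt (fun y => c y * (d y)⁻¹) _ x from this).congr_fderiv ?_
  ext v
  simp only [ContinuousLinearMap.sub_apply, ContinuousLinearMap.add_apply,
    ContinuousLinearMap.smul_apply, smul_eq_mul]
  ring

/-- if `u` is a C² solution of the minimal surface equation on an open set `U`,
then the Noether current `ω₁ = (u_x u_y dx + (1+u_y²) dy)/W` is closed: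
`∂/∂y (u_x u_y/W) = ∂/∂x ((1+u_y²)/W)` on `U`. -/
theorem minimal_surface_equation_implies_first_current_closed
    (U : Set (ℝ × ℝ)) (hU : IsOpen U) (u : ℝ × ℝ → ℝ) (hu : ContDiffOn ℝ 2 u U)
    (hMSE : ∀ z ∈ U,
      (1 + uy u z ^ 2) * fderiv ℝ (ux u) z (1, 0)
        - 2 * ux u z * uy u z * fderiv ℝ (ux u) z (0, 1)
        + (1 + ux u z ^ 2) * fderiv ℝ (uy u) z (0, 1) = 0) :
    ∀ z ∈ U,
      fderiv ℝ (fun w => ux u w * uy u w / Wfun u w) z (0, 1) =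
        fderiv ℝ (fun w => (1 + uy u w ^ 2) / Wfun u w) z (1, 0) := by
  intro z hz
  have hzU : U ∈ nhds z := hU.mem_nhds hz
  have hu2 : ContDiffAt ℝ 2 u z := hu.contDiffAt hzU
  -- second fderiv
  have hd1 : ContDiffAt ℝ 1 (fderiv ℝ u) z := hu2.fderiv_right (by norm_num)
  have hA : DifferentiableAt ℝ (fderiv ℝ u) z := hd1.differentiableAt (by norm_num)
  set A := fderiv ℝ (fderiv ℝ u) z with hAdef
  have hAfd : HasFDerivAt (fderiv ℝ u) A z := hA.hasFDerivAt
  -- symmetry of second derivative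
  have hsymm : ∀ v w : ℝ × ℝ, A v w = A w v := by
    have := hu2.isSymmSndFDerivAt (n := 2) (by simp [minSmoothness_of_isRCLikeNormedField])
    exact this
  -- derivatives of ux, uy
  have hpx : HasFDerivAt (ux u)
      ((ContinuousLinearMap.apply ℝ ℝ ((1:ℝ), (0:ℝ))).comp A) z :=
    (ContinuousLinearMap.apply ℝ ℝ ((1:ℝ), (0:ℝ))).hasFDerivAt.comp z hAfd
  have hqx : HasFDerivAt (uy u)
      ((ContinuousLinearMap.apply ℝ ℝ ((0:ℝ), (1:ℝ))).comp A) z :=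
    (ContinuousLinearMap.apply ℝ ℝ ((0:ℝ), (1:ℝ))).hasFDerivAt.comp z hAfd
  set P := (ContinuousLinearMap.apply ℝ ℝ ((1:ℝ), (0:ℝ))).comp A with hPdef
  set Q := (ContinuousLinearMap.apply ℝ ℝ ((0:ℝ), (1:ℝ))).comp A with hQdef
  set p := ux u z with hp
  set q := uy u z with hq
  -- derivative of g = 1 + ux² + uy²
  have hg : HasFDerivAt (fun w => 1 + ux u w ^ 2 + uy u w ^ 2)
      (((p • P + p • P) + (q • Q + q • Q))) z := by
    have h1 : HasFDerivAt (fun w => ux u w * ux u w) (p • P + p • P) z := hpx.mul hpx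
    have h2 : HasFDerivAt (fun w => uy u w * uy u w) (q • Q + q • Q) z := hqx.mul hqx
    have h3 := (h1.const_add 1).add h2
    refine h3.congr_of_eventuallyEq (Filter.Eventually.of_forall fun w => ?_)
    simp only [Pi.add_apply]
    ring
  have hgpos : (0:ℝ) < 1 + p ^ 2 + q ^ 2 := by positivity
  set W := Wfun u z with hWz
  have hWpos : 0 < W := Real.sqrt_pos.mpr hgpos
  have hW2 : W ^ 2 = 1 + p ^ 2 + q ^ 2 := Real.sq_sqrt hgpos.le
  have hWne : W ≠ 0 := ne_of_gt hWpos
  have hW : HasFDerivAt (Wfun u)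
      ((1 / (2 * W)) • (((p • P + p • P) + (q • Q + q • Q)))) z := by
    have := hg.sqrt (ne_of_gt hgpos)
    exact this
  -- derivative of numerators
  have hnum1 : HasFDerivAt (fun w => ux u w * uy u w) (p • Q + q • P) z := hpx.mul hqx
  have hnum2 : HasFDerivAt (fun w => 1 + uy u w ^ 2) (q • Q + q • Q) z := by
    have h2 : HasFDerivAt (fun w => uy u w * uy u w) (q • Q + q • Q) z := hqx.mul hqx
    have h3 := h2.const_add 1
    refine h3.congr_of_eventuallyEq (Filter.Eventually.of_forall fun w => ?_)
    ring
  -- the two quotients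
  have hf1 := myHasFDerivAt_div hnum1 hW hWne
  have hf2 := myHasFDerivAt_div hnum2 hW hWne
  rw [hf1.fderiv, hf2.fderiv]
  have hsym : P (0, 1) = Q (1, 0) := by
    simp only [hPdef, hQdef, ContinuousLinearMap.coe_comp', Function.comp_apply,
      ContinuousLinearMap.apply_apply]
    exact hsymm (0, 1) (1, 0)
  have hmse := hMSE z hz
  rw [hpx.fderiv, hqx.fderiv] at hmse
  simp only [ContinuousLinearMap.sub_apply, ContinuousLinearMap.add_apply,
    ContinuousLinearMap.smul_apply, smul_eq_mul] at hmse ⊢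
  simp only [← hWz, ← hp, ← hq] at hmse ⊢
  set a := P (1, 0) with ha
  set b := Q (1, 0) with hb
  set c := Q (0, 1) with hc
  rw [hsym] at hmse ⊢
  field_simp
  linear_combination (2*p) * hmse + (2*(p*c - q*b)) * hW2
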